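/- Let ℓ be a prime, m ∈ ℕ ∪ {∞}, and (K,v) a valued field. Every σ ∈ D_v^m vanishes on U_v^1 and hence induces an element σ_v ∈ 𝔤^m(Kv) via the canonical isomorphism Kv^× ≅ U_v/U_v^1. The map σ ↦ σ_v is a surjective group homomorphism D_v^m → 𝔤^m(Kv) with kernel I_v^m; in particular it induces a canonical isomorphism D_v^m / I_v^m ≅ 𝔤^m(Kv). -/

import Mathlib

open Polynomial

noncomputable section

/-- The coefficient ring `Λ_m`: `ℤ/ℓ^m` for finite `m`, and `ℤ_ℓ` for `m = ∞`. -/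
def Lam (ℓ : ℕ) [Fact ℓ.Prime] : ℕ∞ → Type
  | ⊤ => PadicInt ℓ
  | (m : ℕ) => ZMod (ℓ ^ m)

instance (ℓ : ℕ) [Fact ℓ.Prime] : (m : ℕ∞) → CommRing (Lam ℓ m)
  | ⊤ => inferInstanceAs (CommRing (PadicInt ℓ))
  | (m : ℕ) => inferInstanceAs (CommRing (ZMod (ℓ ^ m)))

/-- The canonical projection `Λ_m → Λ_n` (for `n ≤ m`; junk value `0` otherwise). -/
def LamProj (ℓ : ℕ) [Fact ℓ.Prime] : (m n : ℕ∞) → Lam ℓ m →+ Lam ℓ n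
  | ⊤, ⊤ => AddMonoidHom.id _
  | ⊤, (n : ℕ) => (PadicInt.toZModPow n).toAddMonoidHom
  | (m : ℕ), (n : ℕ) =>
      if h : ℓ ^ n ∣ ℓ ^ m then (ZMod.castHom h (ZMod (ℓ ^ n))).toAddMonoidHom else 0
  | (_ : ℕ), ⊤ => 0

/-- The `ℓ^m`-minimized Galois group `𝔤^m(K) = Hom(Kˣ, Λ_m)`. -/
abbrev gal (ℓ : ℕ) [Fact ℓ.Prime] (m : ℕ∞) (K : Type*) [Field K] : Type _ :=
  Additive Kˣ →+ Lam ℓ m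

variable {ℓ : ℕ} [Fact ℓ.Prime] {K : Type*} [Field K]

open scoped Classical

/-- Evaluation of `σ ∈ 𝔤^m(K)` at a unit of `K`. -/
def galu {m : ℕ∞} (σ : gal ℓ m K) (x : Kˣ) : Lam ℓ m :=
  σ (Additive.ofMul x)

/-- Evaluation of `σ ∈ 𝔤^m(K)` at an arbitrary element of `K` (junk value `0` at `0`). -/
def galApp {m : ℕ∞} (σ : gal ℓ m K) (x : K) : Lam ℓ m :=
  if hx : x ≠ 0 then galu σ (Units.mk0 x hx) else 0

/-- Scalar multiplication of `𝔤^m(K)` by `Λ_m`. -/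
def galSmul {m : ℕ∞} (a : Lam ℓ m) (σ : gal ℓ m K) : gal ℓ m K :=
  AddMonoidHom.mk' (fun x => a * σ x) (by intro x y; simp only [map_add, mul_add])

/-- The canonical map `𝔤^m(K) → 𝔤^n(K)`, `σ ↦ σ_n`. -/
def galProj (m n : ℕ∞) (σ : gal ℓ m K) : gal ℓ n K :=
  (LamProj ℓ m n).comp σ

/-- `(σ,τ)` is a C-pair: `σ(x)·τ(1−x) = σ(1−x)·τ(x)` for all `x ∈ K ∖ {0,1}`. -/
def IsCPair {m : ℕ∞} (σ τ : gal ℓ m K) : Prop :=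
  ∀ x : K, x ≠ 0 → x ≠ 1 →
    galApp σ x * galApp τ (1 - x) = galApp σ (1 - x) * galApp τ x

/-- A subset of `𝔤^m(K)` is a C-set if all pairs of its elements are C-pairs. -/
def IsCSet {m : ℕ∞} (S : Set (gal ℓ m K)) : Prop :=
  ∀ σ ∈ S, ∀ τ ∈ S, IsCPair σ τ

/-- `μ_{c·ℓ^m} ⊂ K`: the polynomial `X^{c·ℓ^m} − 1` splits completely in `K`
(for all finite exponents when `m = ∞`). -/
def MuIn (K : Type*) [Field K] (c ℓ : ℕ) : ℕ∞ → Prop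
  | ⊤ => ∀ k : ℕ, Polynomial.Splits (Polynomial.map (RingHom.id K) (Polynomial.X ^ (c * ℓ ^ k) - 1))
  | (N : ℕ) => Polynomial.Splits (Polynomial.map (RingHom.id K) (Polynomial.X ^ (c * ℓ ^ N) - 1))

/-- `M_r(n) = (r+1)·n − r`. -/
def Mfun (r : ℕ) : ℕ∞ → ℕ∞
  | ⊤ => ⊤
  | (n : ℕ) => (((r + 1) * n - r : ℕ) : ℕ∞)

/-- `N(n) = M_1((6·ℓ^{3n−2} − 7)·(n−1) + 3n − 2)`. -/
def Nfun (ℓ : ℕ) : ℕ∞ → ℕ∞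
  | ⊤ => ⊤
  | (n : ℕ) => Mfun 1 (((6 * ℓ ^ (3 * n - 2) - 7) * (n - 1) + 3 * n - 2 : ℕ) : ℕ∞)

/-- `R(n) = N(M_2(M_1(n)))`. -/
def Rfun (ℓ : ℕ) (n : ℕ∞) : ℕ∞ :=
  Nfun ℓ (Mfun 2 (Mfun 1 n))

/-- The minimized inertia group `I_v^m` of a valuation (valuation subring) of `K`:
homomorphisms vanishing on the `v`-units. -/
def inertia (ℓ : ℕ) [Fact ℓ.Prime] (m : ℕ∞) (A : ValuationSubring K) : Set (gal ℓ m K) :=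
  {σ | ∀ x : Kˣ, A.valuation (x : K) = 1 → galu σ x = 0}

/-- The minimized decomposition group `D_v^m` of a valuation (valuation subring) of `K`:
homomorphisms vanishing on the principal `v`-units `1 + 𝔪_v`. -/
def decomp (ℓ : ℕ) [Fact ℓ.Prime] (m : ℕ∞) (A : ValuationSubring K) : Set (gal ℓ m K) :=
  {σ | ∀ x : Kˣ, A.valuation ((x : K) - 1) < 1 → galu σ x = 0}

/-- A subgroup of (the units of) a linearly ordered group-with-zero is convex. -/
def IsConvexSub {Γ : Type*} [LinearOrderedCommGroupWithZero Γ] (C : Subgroup Γˣ) : Prop :=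
  ∀ γ c : Γˣ, (1 : Γ) ≤ (γ : Γ) → (γ : Γ) ≤ (c : Γ) → c ∈ C → γ ∈ C

/-- A subgroup is `ℓ`-divisible. -/
def IsLDivisible {Γ : Type*} [LinearOrderedCommGroupWithZero Γ] (ℓ : ℕ) (C : Subgroup Γˣ) :
    Prop :=
  ∀ c ∈ C, ∃ d ∈ C, d ^ ℓ = c

/-- Condition (V1): the value group `vK` contains no nontrivial `ℓ`-divisible convex
subgroups. -/
def NoLDivConvex (ℓ : ℕ) (A : ValuationSubring K) : Prop :=
  ∀ C : Subgroup (A.ValueGroup)ˣ, IsConvexSub C → IsLDivisible ℓ C → C = ⊥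

/-- The residue field `Kv` of a valuation. -/
abbrev resField (A : ValuationSubring K) : Type _ := IsLocalRing.ResidueField A

/-- `τ ∈ 𝔤^m(Kv)` is the element induced by `σ ∈ D_v^m` (i.e. `τ = σ_v`): for every
`v`-unit `x` one has `τ(x̄) = σ(x)`. -/
def Induces {m : ℕ∞} (A : ValuationSubring K) (σ : gal ℓ m K)
    (τ : gal ℓ m (resField A)) : Prop :=
  ∀ (x : Kˣ) (h : A.valuation (x : K) = 1),
    galApp τ (IsLocalRing.residue A ⟨(x : K), (A.valuation_le_one_iff (x : K)).mp h.le⟩) =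
      galu σ x

/-- An `m`-visible valuation. -/
def IsVisibleVal (ℓ : ℕ) [Fact ℓ.Prime] (m : ℕ∞) (A : ValuationSubring K) : Prop :=
  NoLDivConvex ℓ A ∧
  ¬ IsCSet (Set.univ : Set (gal ℓ m (resField A))) ∧
  ∀ B : ValuationSubring (resField A),
    decomp ℓ m B = Set.univ → inertia ℓ m B = {0}

/-- `Σ^⊥ = ∩_{σ ∈ Σ} ker σ ⊆ Kˣ`. -/
def orth {m : ℕ∞} (S : Set (gal ℓ m K)) : Set Kˣ :=
  {x | ∀ σ ∈ S, galu σ x = 0}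

/-- `σ` is valuative: `σ ∈ I_v^m` for some valuation `v` of `K`. -/
def IsValuative {m : ℕ∞} (σ : gal ℓ m K) : Prop :=
  ∃ A : ValuationSubring K, σ ∈ inertia ℓ m A

/-- `V = v_σ` is the coarsest valuation with `σ ∈ I_V^m`. -/
def IsVsigma {m : ℕ∞} (σ : gal ℓ m K) (V : ValuationSubring K) : Prop :=
  σ ∈ inertia ℓ m V ∧ ∀ W : ValuationSubring K, σ ∈ inertia ℓ m W → W ≤ V

/-- `V = v_Σ` is the coarsest valuation with `Σ ⊆ I_V^m`. -/
def IsVSet {m : ℕ∞} (S : Set (gal ℓ m K)) (V : ValuationSubring K) : Prop :=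
  S ⊆ inertia ℓ m V ∧ ∀ W : ValuationSubring K, S ⊆ inertia ℓ m W → W ≤ V

/-- The set `D^m_n(Σ)`. -/
def Dmn (n m : ℕ∞) (S : Set (gal ℓ n K)) : Set (gal ℓ n K) :=
  {τ | ∀ σ ∈ S, ∃ τ₁ τ₂ : gal ℓ n K, ∃ σ' τ' τ₁' τ₂' : gal ℓ m K,
    galProj m n σ' = σ ∧ galProj m n τ' = τ ∧ galProj m n τ₁' = τ₁ ∧ galProj m n τ₂' = τ₂ ∧
    ¬ IsCPair τ₁ τ₂ ∧ IsCPair σ' τ' ∧ IsCPair σ' τ₁' ∧ IsCPair σ' τ₂'}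

/-- The set `I^m_n(Σ)`. -/
def Imn (n m : ℕ∞) (S : Set (gal ℓ n K)) : Set (gal ℓ n K) :=
  {σ | σ ∈ S ∧ ∃ σ' : gal ℓ m K, galProj m n σ' = σ ∧
    ∀ τ ∈ S, ∃ τ' : gal ℓ m K, galProj m n τ' = τ ∧ IsCPair σ' τ'}

/-- `K` is a function field over `k`, i.e. a finitely generated field extension. -/
def IsFunctionField (k K : Type*) [Field k] [Field K] [Algebra k K] : Prop :=
  ∃ s : Finset K, IntermediateField.adjoin k (s : Set K) = ⊤

/-- `trdeg(K|k) = d`. -/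
def HasTrdeg (k K : Type*) [Field k] [Field K] [Algebra k K] (d : ℕ) : Prop :=
  ∃ b : Fin d → K, IsTranscendenceBasis k b


/-- The set `ℓ^n·𝔤^m(K)` (interpreted as the trivial subgroup when `n = ∞`). -/
def lPowSet (ℓ : ℕ) [Fact ℓ.Prime] (m : ℕ∞) (K : Type*) [Field K] : ℕ∞ → Set (gal ℓ m K)
  | ⊤ => {0}
  | (k : ℕ) => {x | ∃ σ : gal ℓ m K, x = galSmul ((ℓ : Lam ℓ m) ^ k) σ}

end



lemma zmod_dvd_of_mul_eq_zero {q : ℕ} [NeZero q] {d : ℕ} (hd : d ∣ q) (hd0 : 0 < d)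
    (c : ZMod q) (h : ((q / d : ℕ) : ZMod q) * c = 0) : d ∣ c.val := by
  have hq : 0 < q := Nat.pos_of_ne_zero (NeZero.ne q)
  have hqd : 0 < q / d := Nat.div_pos (Nat.le_of_dvd hq hd) hd0
  have h2 : (((q / d) * c.val : ℕ) : ZMod q) = 0 := by
    push_cast
    rw [ZMod.natCast_zmod_val, h]
  rw [ZMod.natCast_eq_zero_iff] at h2
  have hq' : q = (q / d) * d := (Nat.div_mul_cancel hd).symm
  obtain ⟨e, he⟩ := h2
  have he2 : q / d * c.val = q / d * (d * e) := by rw [he, ← mul_assoc, Nat.div_mul_cancel hd]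
  exact ⟨e, Nat.eq_of_mul_eq_mul_left hqd he2⟩

lemma zmod_baer (q : ℕ) (hq : 0 < q) : Module.Baer (ZMod q) (ZMod q) := by
  haveI : NeZero q := ⟨hq.ne'⟩
  haveI : IsPrincipalIdealRing (ZMod q) :=
    IsPrincipalIdealRing.of_surjective (Int.castRingHom (ZMod q)) ZMod.intCast_surjective
  intro I g
  obtain ⟨a, ha⟩ := (IsPrincipalIdealRing.principal I).principal
  have haI : a ∈ I := by rw [ha]; exact Ideal.subset_span rfl
  set c := g ⟨a, haI⟩ with hc
  set d := Nat.gcd a.val q with hdd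
  have hdq : d ∣ q := Nat.gcd_dvd_right _ _
  have hda : d ∣ a.val := Nat.gcd_dvd_left _ _
  have hd0 : 0 < d := Nat.gcd_pos_of_pos_right _ hq
  -- (q/d) * a = 0 in ZMod q
  have h1 : ((q / d : ℕ) : ZMod q) * a = 0 := by
    conv_lhs => rw [← ZMod.natCast_zmod_val a]
    rw [← Nat.cast_mul, ZMod.natCast_eq_zero_iff]
    obtain ⟨e, he⟩ := hda
    refine ⟨e, ?_⟩
    rw [he, ← mul_assoc, Nat.div_mul_cancel hdq]
  -- (q/d) * c = 0
  have h2 : ((q / d : ℕ) : ZMod q) * c = 0 := by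
    have hz : ((q / d : ℕ) : ZMod q) • (⟨a, haI⟩ : I) = 0 :=
      Subtype.ext (by simpa [smul_eq_mul] using h1)
    calc ((q / d : ℕ) : ZMod q) * c = ((q / d : ℕ) : ZMod q) • g ⟨a, haI⟩ := rfl
    _ = g (((q / d : ℕ) : ZMod q) • ⟨a, haI⟩) := (map_smul g _ _).symm
    _ = 0 := by rw [hz, map_zero]
  have hdc : d ∣ c.val := zmod_dvd_of_mul_eq_zero hdq hd0 c h2
  -- Bezout: (d : ZMod q) = a * u
  obtain ⟨u, hu⟩ : ∃ u : ZMod q, (d : ZMod q) = a * u := by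
    refine ⟨((Nat.gcdA a.val q : ℤ) : ZMod q), ?_⟩
    have hb := Nat.gcd_eq_gcd_ab a.val q
    have : ((d : ℤ) : ZMod q) = ((a.val * Nat.gcdA a.val q + q * Nat.gcdB a.val q : ℤ) : ZMod q) := by
      rw [hdd] at *; exact_mod_cast congrArg (fun z : ℤ => ((z : ZMod q))) hb
    push_cast at this
    rw [ZMod.natCast_self] at this
    simpa [ZMod.natCast_zmod_val] using this
  -- c = a * y
  obtain ⟨y, hy⟩ : ∃ y : ZMod q, c = a * y := by
    obtain ⟨e, he⟩ := hdc
    refine ⟨u * (e : ZMod q), ?_⟩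
    have : c = ((d * e : ℕ) : ZMod q) := by rw [← he, ZMod.natCast_zmod_val]
    rw [this]; push_cast; rw [hu]; ring
  refine ⟨y • LinearMap.id, fun x hx => ?_⟩
  obtain ⟨t, ht⟩ := Ideal.mem_span_singleton'.mp (ha ▸ hx)
  have hx' : (⟨x, hx⟩ : I) = t • (⟨a, haI⟩ : I) := Subtype.ext (by simp [smul_eq_mul, ht])
  rw [hx', map_smul, ← hc, hy, smul_eq_mul]
  show y * x = t * (a * y)
  rw [← ht]; ring


theorem addHom_extend_zmod {G : Type*} [AddCommGroup G] (U : AddSubgroup G)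
    (hU : ∀ (g : G) (n : ℕ), 0 < n → n • g ∈ U → g ∈ U)
    (q : ℕ) (hq : 0 < q) (f : U →+ ZMod q) :
    ∃ F : G →+ ZMod q, ∀ u : U, F u = f u := by
  haveI : NeZero q := ⟨hq.ne'⟩
  -- the subgroups of q-th multiples
  let sG : AddSubgroup G := (AddMonoidHom.mk' (fun x : G => q • x) (fun a b => smul_add q a b)).range
  let sU : AddSubgroup U := (AddMonoidHom.mk' (fun x : U => q • x) (fun a b => smul_add q a b)).range
  have hsG : ∀ x : G, q • x ∈ sG := fun x => ⟨x, rfl⟩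
  have hsU : ∀ x : U, q • x ∈ sU := fun x => ⟨x, rfl⟩
  letI : Module (ZMod q) (G ⧸ sG) := QuotientAddGroup.zmodModule hsG
  letI : Module (ZMod q) (U ⧸ sU) := QuotientAddGroup.zmodModule hsU
  -- the induced map U/qU → G/qG
  have hcomp : ∀ u : U, u ∈ sU → ((u : G) : G ⧸ sG) = 0 := by
    intro u hu
    obtain ⟨w, hw⟩ := hu
    rw [QuotientAddGroup.eq_zero_iff]
    exact ⟨(w : U), by rw [← hw]; simp⟩
  let ι : (U ⧸ sU) →+ (G ⧸ sG) := QuotientAddGroup.lift sU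
    ((QuotientAddGroup.mk' sG).comp (U.subtype)) (by
      intro u hu; simpa using hcomp u hu)
  have hι : Function.Injective ι := by
    rw [injective_iff_map_eq_zero]
    intro x hx
    induction x using QuotientAddGroup.induction_on with
    | H u =>
      have : ((u : G) : G ⧸ sG) = 0 := hx
      rw [QuotientAddGroup.eq_zero_iff] at this
      obtain ⟨w, hw⟩ := this
      have hw' : q • w = (u : G) := hw
      have hwU : w ∈ U := hU w q hq (by rw [hw']; exact u.2)
      rw [QuotientAddGroup.eq_zero_iff]
      exact ⟨⟨w, hwU⟩, Subtype.ext (by simpa using hw')⟩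
  -- the induced map U/qU → ZMod q
  let fbar : (U ⧸ sU) →+ ZMod q := QuotientAddGroup.lift sU f (by
    intro u hu
    obtain ⟨w, hw⟩ := hu
    have hw' : q • w = u := hw
    rw [AddMonoidHom.mem_ker, ← hw', map_nsmul]
    simp [nsmul_eq_mul, ZMod.natCast_self])
  -- upgrade to linear maps
  let ιl : (U ⧸ sU) →ₗ[ZMod q] (G ⧸ sG) :=
    { toFun := ι, map_add' := map_add ι, map_smul' := fun c x => ZMod.map_smul ι c x }
  let fl : (U ⧸ sU) →ₗ[ZMod q] ZMod q :=
    { toFun := fbar, map_add' := map_add fbar, map_smul' := fun c x => ZMod.map_smul fbar c x }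
  obtain ⟨h, hh⟩ := (zmod_baer q hq).extension_property ιl hι fl
  refine ⟨h.toAddMonoidHom.comp ((QuotientAddGroup.mk' sG)), fun u => ?_⟩
  have hh' := congrArg LinearMap.toAddMonoidHom hh
  have h2 := DFunLike.congr_fun hh' ((QuotientAddGroup.mk' sU) u)
  have h3 : (h ∘ₗ ιl).toAddMonoidHom ((QuotientAddGroup.mk' sU) u)
      = h.toAddMonoidHom ((QuotientAddGroup.mk' sG) (u : G)) := rfl
  have h4 : fl.toAddMonoidHom ((QuotientAddGroup.mk' sU) u) = f u := rfl
  exact (h3.symm.trans h2).trans h4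


theorem padic_small {p : ℕ} [Fact p.Prime] (a : ℤ_[p])
    (h : ∀ k : ℕ, ‖a‖ ≤ (p : ℝ) ^ (-(k : ℤ))) : a = 0 := by
  have hp1 : (1 : ℝ) < (p : ℝ) := by exact_mod_cast (Fact.out : p.Prime).one_lt
  have hlim : Filter.Tendsto (fun k : ℕ => (p : ℝ) ^ (-(k : ℤ))) Filter.atTop (nhds 0) := by
    have h2 : Filter.Tendsto (fun k : ℕ => ((p : ℝ)⁻¹) ^ k) Filter.atTop (nhds 0) :=
      tendsto_pow_atTop_nhds_zero_of_lt_one (by positivity) (inv_lt_one_of_one_lt₀ hp1)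
    have heq : (fun k : ℕ => (p : ℝ) ^ (-(k : ℤ))) = fun k : ℕ => ((p : ℝ)⁻¹) ^ k := by
      funext k; rw [zpow_neg, ← inv_zpow, zpow_natCast]
    rw [heq]; exact h2
  have : ‖a‖ ≤ 0 := le_of_tendsto_of_tendsto' tendsto_const_nhds hlim h
  simpa using norm_le_zero_iff.mp this

theorem padic_norm_le_of_toZModPow_eq_zero {p : ℕ} [Fact p.Prime] (k : ℕ) (a : ℤ_[p])
    (h : PadicInt.toZModPow k a = 0) : ‖a‖ ≤ (p : ℝ) ^ (-(k : ℤ)) := by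
  rw [PadicInt.norm_le_pow_iff_mem_span_pow]
  have := PadicInt.ker_toZModPow (p := p) k
  rw [← this]
  exact h

theorem addHom_extend_padic {G : Type*} [AddCommGroup G] (U : AddSubgroup G)
    (hU : ∀ (g : G) (n : ℕ), 0 < n → n • g ∈ U → g ∈ U)
    (p : ℕ) [Fact p.Prime] (f : U →+ ℤ_[p]) :
    ∃ F : G →+ ℤ_[p], ∀ u : U, F u = f u := by
  set c : ℕ → ℝ := fun k => (p : ℝ) ^ (-(k : ℤ)) with hc
  set S : ℕ → Set (G → ℤ_[p]) := fun k =>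
    {σ | (∀ x y : G, ‖σ (x + y) - σ x - σ y‖ ≤ c k) ∧ (∀ u : U, ‖σ u - f u‖ ≤ c k)} with hS
  have hmono : ∀ j k, j ≤ k → S k ⊆ S j := by
    intro j k hjk σ hσ
    have hck : c k ≤ c j := by
      apply zpow_le_zpow_right₀ (by exact_mod_cast (Fact.out : p.Prime).one_le) (by omega)
    exact ⟨fun x y => (hσ.1 x y).trans hck, fun u => (hσ.2 u).trans hck⟩
  have hdir : Directed (· ⊇ ·) S := fun j k =>
    ⟨max j k, hmono j (max j k) (le_max_left _ _), hmono k (max j k) (le_max_right _ _)⟩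
  have hclosed : ∀ k, IsClosed (S k) := by
    intro k
    have h1 : IsClosed {σ : G → ℤ_[p] | ∀ x y : G, ‖σ (x + y) - σ x - σ y‖ ≤ c k} := by
      rw [Set.setOf_forall]
      refine isClosed_iInter fun x => ?_
      rw [Set.setOf_forall]
      refine isClosed_iInter fun y => ?_
      exact isClosed_le
        ((((continuous_apply (x + y)).sub (continuous_apply x)).sub (continuous_apply y)).norm)
        continuous_const
    have h2 : IsClosed {σ : G → ℤ_[p] | ∀ u : U, ‖σ u - f u‖ ≤ c k} := by
      rw [Set.setOf_forall]
      refine isClosed_iInter fun u => ?_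
      exact isClosed_le (((continuous_apply (u : G)).sub continuous_const).norm) continuous_const
    exact (h1.inter h2)
  have hnonempty : ∀ k, (S k).Nonempty := by
    intro k
    have hq : 0 < p ^ k := pow_pos (Fact.out : p.Prime).pos k
    set π := PadicInt.toZModPow (p := p) k with hπ
    obtain ⟨Fk, hFk⟩ := addHom_extend_zmod U hU (p ^ k) hq (π.toAddMonoidHom.comp f)
    refine ⟨fun x => ((Fk x).val : ℤ_[p]), ?_, ?_⟩
    · intro x y
      apply padic_norm_le_of_toZModPow_eq_zero
      simp only [map_sub, map_natCast, ZMod.natCast_zmod_val]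
      rw [map_add Fk]
      ring
    · intro u
      apply padic_norm_le_of_toZModPow_eq_zero
      simp only [map_sub, map_natCast, ZMod.natCast_zmod_val]
      rw [hFk u]
      simp [hπ]
  obtain ⟨σ, hσ⟩ := IsCompact.nonempty_iInter_of_directed_nonempty_isCompact_isClosed S hdir
    hnonempty (fun k => (hclosed k).isCompact) hclosed
  simp only [Set.mem_iInter] at hσ
  refine ⟨AddMonoidHom.mk' σ (fun x y => ?_), fun u => ?_⟩
  · have h0 : σ (x + y) - σ x - σ y = 0 := padic_small _ (fun k => (hσ k).1 x y)
    rw [sub_sub] at h0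
    exact sub_eq_zero.mp h0
  · exact sub_eq_zero.mp (padic_small _ (fun k => (hσ k).2 u))

theorem addHom_extend_lam {G : Type*} [AddCommGroup G] (U : AddSubgroup G)
    (hU : ∀ (g : G) (n : ℕ), 0 < n → n • g ∈ U → g ∈ U)
    (ℓ : ℕ) [Fact ℓ.Prime] (m : ℕ∞) (f : U →+ Lam ℓ m) :
    ∃ F : G →+ Lam ℓ m, ∀ u : U, F u = f u := by
  cases m with
  | top => exact addHom_extend_padic U hU ℓ f
  | coe m => exact addHom_extend_zmod U hU (ℓ ^ m) (pow_pos (Fact.out : ℓ.Prime).pos m) f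

noncomputable section valsec

variable {ℓ : ℕ} [Fact ℓ.Prime] {K : Type*} [Field K] {m : ℕ∞}

lemma galu_mul (σ : gal ℓ m K) (x y : Kˣ) : galu σ (x * y) = galu σ x + galu σ y :=
  map_add σ (Additive.ofMul x) (Additive.ofMul y)

lemma galu_one (σ : gal ℓ m K) : galu σ (1 : Kˣ) = 0 :=
  map_zero σ

/-- The inclusion of units of the valuation ring into units of `K`. -/
def unitMapK (A : ValuationSubring K) : Aˣ →* Kˣ :=
  Units.map A.subtype.toMonoidHom

/-- The reduction of units of the valuation ring to units of the residue field. -/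
def resUnits (A : ValuationSubring K) : Aˣ →* (resField A)ˣ :=
  Units.map (IsLocalRing.residue (A : Type _)).toMonoidHom

lemma val_unitMapK (A : ValuationSubring K) (a : Aˣ) :
    A.valuation ((unitMapK A a : Kˣ) : K) = 1 :=
  A.valuation_unit a

lemma galApp_units {F : Type*} [Field F] (τ : gal ℓ m F) (w : Fˣ) :
    galApp τ ((w : F)) = galu τ w := by
  unfold galApp
  rw [dif_pos w.ne_zero]
  congr 1
  exact Units.ext rfl

lemma exists_unit_of_val_eq_one (A : ValuationSubring K) (x : Kˣ)
    (h : A.valuation (x : K) = 1) : ∃ a : Aˣ, unitMapK A a = x := by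
  have hmem : (x : K) ∈ A := (A.valuation_le_one_iff _).mp h.le
  have hmem' : ((x : K)⁻¹ : K) ∈ A := by
    rw [← A.valuation_le_one_iff, map_inv₀, h, inv_one]
  refine ⟨⟨⟨(x : K), hmem⟩, ⟨(x : K)⁻¹, hmem'⟩,
    Subtype.ext (by simp), Subtype.ext (by simp)⟩, Units.ext rfl⟩

lemma resUnits_surjective (A : ValuationSubring K) :
    Function.Surjective (resUnits A) := by
  intro u
  obtain ⟨a, ha⟩ := Ideal.Quotient.mk_surjective (I := IsLocalRing.maximalIdeal (A : Type _)) (u : resField A)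
  have hne : (u : resField A) ≠ 0 := u.ne_zero
  have hunit : IsUnit a := by
    by_contra hn
    have : a ∈ IsLocalRing.maximalIdeal (A : Type _) := hn
    have : IsLocalRing.residue (A : Type _) a = 0 := Ideal.Quotient.eq_zero_iff_mem.mpr this
    rw [show IsLocalRing.residue (A : Type _) a = (u : resField A) from ha] at this
    exact hne this
  refine ⟨hunit.unit, Units.ext ?_⟩
  show IsLocalRing.residue (A : Type _) (hunit.unit : A) = (u : resField A)
  rw [IsUnit.unit_spec]
  exact ha

lemma residue_unitMapK (A : ValuationSubring K) (a : Aˣ) (h : ((unitMapK A a : Kˣ) : K) ∈ A) :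
    IsLocalRing.residue (A : Type _) ⟨((unitMapK A a : Kˣ) : K), h⟩ = ((resUnits A a : (resField A)ˣ) : resField A) := by
  congr 1

lemma val_sub_one_lt_of_res_eq_one (A : ValuationSubring K) (a : Aˣ)
    (h : resUnits A a = 1) : A.valuation (((unitMapK A a : Kˣ) : K) - 1) < 1 := by
  have h1 : IsLocalRing.residue (A : Type _) ((a : A) - 1) = 0 := by
    rw [map_sub, map_one]
    have : IsLocalRing.residue (A : Type _) (a : A) = 1 := congrArg Units.val h
    rw [this, sub_self]
  have h2 : ((a : A) - 1) ∈ IsLocalRing.maximalIdeal (A : Type _) :=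
    Ideal.Quotient.eq_zero_iff_mem.mp h1
  have h3 := (A.valuation_lt_one_iff _).mp h2
  simp at h3; exact h3

lemma decomp_key {σ : gal ℓ m K} (A : ValuationSubring K) (hσ : σ ∈ decomp ℓ m A)
    (a b : Aˣ) (h : resUnits A a = resUnits A b) :
    galu σ (unitMapK A a) = galu σ (unitMapK A b) := by
  have hres : resUnits A (a * b⁻¹) = 1 := by rw [map_mul, h, map_inv, mul_inv_cancel]
  have hval := val_sub_one_lt_of_res_eq_one A _ hres
  have h0 : galu σ (unitMapK A (a * b⁻¹)) = 0 := hσ _ hval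
  have : unitMapK A a = unitMapK A (a * b⁻¹) * unitMapK A b := by
    rw [← map_mul]; congr 1; group
  rw [this, galu_mul, h0, zero_add]

/-- From `v x = 1`, the canonical element of the valuation ring. -/
lemma mem_of_val_eq_one (A : ValuationSubring K) (x : Kˣ) (h : A.valuation (x : K) = 1) :
    (x : K) ∈ A := (A.valuation_le_one_iff _).mp h.le

lemma val_eq_one_of_val_sub_one_lt (A : ValuationSubring K) (x : Kˣ)
    (h : A.valuation ((x : K) - 1) < 1) : A.valuation (x : K) = 1 := by
  have : (x : K) = 1 + ((x : K) - 1) := by ring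
  rw [this]
  exact Valuation.map_one_add_of_lt _ h

lemma res_eq_one_of_val_sub_one_lt (A : ValuationSubring K) (x : Kˣ)
    (h : A.valuation ((x : K) - 1) < 1) (hmem : (x : K) ∈ A) :
    IsLocalRing.residue (A : Type _) ⟨(x : K), hmem⟩ = 1 := by
  have hmem1 : ((⟨(x : K), hmem⟩ : A) - 1) ∈ IsLocalRing.maximalIdeal (A : Type _) := by
    rw [A.valuation_lt_one_iff]
    simpa using h
  have := Ideal.Quotient.eq_zero_iff_mem.mpr hmem1
  have h2 : IsLocalRing.residue (A : Type _) ((⟨(x : K), hmem⟩ : A) - 1) = 0 := this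
  rw [map_sub, map_one, sub_eq_zero] at h2
  exact h2

end valsec


noncomputable section mainsec

variable {ℓ : ℕ} [Fact ℓ.Prime] {K : Type*} [Field K] {m : ℕ∞}

lemma galApp_add {F : Type*} [Field F] (τ τ' : gal ℓ m F) (y : F) :
    galApp (τ + τ') y = galApp τ y + galApp τ' y := by
  unfold galApp
  split
  · rfl
  · simp

lemma galApp_mul_of_ne {F : Type*} [Field F] (τ : gal ℓ m F) (y z : F)
    (hy : y ≠ 0) (hz : z ≠ 0) : galApp τ (y * z) = galApp τ y + galApp τ z := by
  unfold galApp
  rw [dif_pos (mul_ne_zero hy hz), dif_pos hy, dif_pos hz,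
    show Units.mk0 (y * z) (mul_ne_zero hy hz) = Units.mk0 y hy * Units.mk0 z hz from
      Units.ext rfl, galu_mul]

lemma exists_induces (A : ValuationSubring K) {σ : gal ℓ m K} (hσ : σ ∈ decomp ℓ m A) :
    ∃ τ : gal ℓ m (resField A), Induces A σ τ := by
  choose lift hlift using resUnits_surjective A
  refine ⟨AddMonoidHom.mk' (fun u => galu σ (unitMapK A (lift (Additive.toMul u)))) ?_, ?_⟩
  · intro u v
    have h1 : resUnits A (lift (Additive.toMul (u + v)))
        = resUnits A (lift (Additive.toMul u) * lift (Additive.toMul v)) := by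
      rw [map_mul, hlift, hlift, hlift]
      rfl
    rw [decomp_key A hσ _ _ h1, map_mul, galu_mul]
  · intro x h
    obtain ⟨a, ha⟩ := exists_unit_of_val_eq_one A x h
    subst ha
    rw [residue_unitMapK A a _, galApp_units]
    show galu σ (unitMapK A (lift (resUnits A a))) = galu σ (unitMapK A a)
    exact decomp_key A hσ _ _ (hlift _)

lemma induces_eq (A : ValuationSubring K) {σ : gal ℓ m K} {τ τ' : gal ℓ m (resField A)}
    (h : Induces A σ τ) (h' : Induces A σ τ') : τ = τ' := by
  ext u
  obtain ⟨a, ha⟩ := resUnits_surjective A (Additive.toMul u)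
  have hv := val_unitMapK A a
  have e1 := h (unitMapK A a) hv
  have e2 := h' (unitMapK A a) hv
  rw [residue_unitMapK A a _, galApp_units] at e1 e2
  rw [ha] at e1 e2
  exact e1.trans e2.symm

lemma induces_zero_iff (A : ValuationSubring K) {σ : gal ℓ m K} (hσ : σ ∈ decomp ℓ m A)
    {τ : gal ℓ m (resField A)} (h : Induces A σ τ) : τ = 0 ↔ σ ∈ inertia ℓ m A := by
  constructor
  · intro h0 x hx
    have e := h x hx
    rw [h0] at e
    rw [← e]
    simp [galApp, galu]
  · intro hin
    refine induces_eq A h ?_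
    intro x hx
    rw [hin x hx]
    simp [galApp, galu]

lemma res_ne_zero (A : ValuationSubring K) (x : Kˣ) (h : A.valuation (x : K) = 1)
    (hmem : (x : K) ∈ A) : IsLocalRing.residue (A : Type _) ⟨(x : K), hmem⟩ ≠ 0 := by
  obtain ⟨a, ha⟩ := exists_unit_of_val_eq_one A x h
  subst ha
  rw [residue_unitMapK A a _]
  exact Units.ne_zero _

lemma gamma_pow_eq_one {Γ : Type*} [LinearOrderedCommGroupWithZero Γ] (γ : Γ) (n : ℕ)
    (hn : 0 < n) (h : γ ^ n = 1) : γ = 1 := by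
  rcases lt_trichotomy γ 1 with h1 | h1 | h1
  · exact absurd h (pow_lt_one₀ zero_le' h1 hn.ne').ne
  · exact h1
  · exact absurd h (one_lt_pow₀ h1 hn.ne').ne'

lemma exists_decomp_induces (A : ValuationSubring K) (τ : gal ℓ m (resField A)) :
    ∃ σ ∈ decomp ℓ m A, Induces A σ τ := by
  set U : AddSubgroup (Additive Kˣ) :=
    { carrier := {x | A.valuation ((Additive.toMul x : Kˣ) : K) = 1}
      add_mem' := by
        intro a b ha hb
        simp only [Set.mem_setOf_eq] at *
        have hab : ((Additive.toMul (a + b) : Kˣ) : K)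
            = ((Additive.toMul a : Kˣ) : K) * ((Additive.toMul b : Kˣ) : K) := rfl
        rw [hab, map_mul, ha, hb, one_mul]
      zero_mem' := by
        simp only [Set.mem_setOf_eq]
        have : ((Additive.toMul (0 : Additive Kˣ) : Kˣ) : K) = 1 := rfl
        rw [this, map_one]
      neg_mem' := by
        intro a ha
        simp only [Set.mem_setOf_eq] at *
        have h1 : ((Additive.toMul (-a) : Kˣ) : K) = (((Additive.toMul a : Kˣ)⁻¹ : Kˣ) : K) := rfl
        rw [h1, Units.val_inv_eq_inv_val, map_inv₀, ha, inv_one] } with hUdef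
  have hU : ∀ (g : Additive Kˣ) (n : ℕ), 0 < n → n • g ∈ U → g ∈ U := by
    intro g n hn hmem
    have h1 : A.valuation (((Additive.toMul g : Kˣ) : K)) ^ n = 1 := by
      have h2 : ((Additive.toMul (n • g) : Kˣ) : K) = ((Additive.toMul g : Kˣ) : K) ^ n := rfl
      have h3 : A.valuation ((Additive.toMul (n • g) : Kˣ) : K) = 1 := hmem
      rw [h2, map_pow] at h3
      exact h3
    exact gamma_pow_eq_one _ n hn h1
  have hmemA : ∀ u : U, ((Additive.toMul (u : Additive Kˣ) : Kˣ) : K) ∈ A := fun u =>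
    mem_of_val_eq_one A _ u.2
  have hresne : ∀ u : U,
      IsLocalRing.residue (A : Type _) ⟨_, hmemA u⟩ ≠ 0 := fun u =>
    res_ne_zero A (Additive.toMul (u : Additive Kˣ)) u.2 (hmemA u)
  set f : U →+ Lam ℓ m := AddMonoidHom.mk'
    (fun u => galApp τ (IsLocalRing.residue (A : Type _) ⟨_, hmemA u⟩)) (by
      intro u v
      have hsub : (⟨_, hmemA (u + v)⟩ : A) = (⟨_, hmemA u⟩ : A) * (⟨_, hmemA v⟩ : A) :=
        Subtype.ext rfl
      rw [hsub, map_mul]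
      exact galApp_mul_of_ne τ _ _ (hresne u) (hresne v)) with hfdef
  obtain ⟨F, hF⟩ := addHom_extend_lam U hU ℓ m f
  have key : ∀ (x : Kˣ) (hx : Additive.ofMul x ∈ U),
      galu F x = galApp τ (IsLocalRing.residue (A : Type _) ⟨(x : K), hmemA ⟨_, hx⟩⟩) :=
    fun x hx => hF ⟨Additive.ofMul x, hx⟩
  refine ⟨F, ?_, ?_⟩
  · intro x hx
    have hv1 : A.valuation (x : K) = 1 := val_eq_one_of_val_sub_one_lt A x hx
    have hmemU : Additive.ofMul x ∈ U := hv1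
    rw [show galu F x = _ from key x hmemU,
      res_eq_one_of_val_sub_one_lt A x hx _,
      show (1 : resField A) = ((1 : (resField A)ˣ) : resField A) from rfl,
      galApp_units, galu_one]
  · intro x hx
    have hmemU : Additive.ofMul x ∈ U := hx
    exact (key x hmemU).symm

end mainsec


/-- The canonical map `D_v^m → 𝔤^m(Kv)`, `σ ↦ σ_v`, is a well-defined surjective
group homomorphism with kernel `I_v^m`. -/
theorem stmt6 (ℓ : ℕ) [Fact ℓ.Prime] (m : ℕ∞) (hm : 1 ≤ m) (K : Type*) [Field K]
    (A : ValuationSubring K) :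
    (∀ σ ∈ decomp ℓ m A, ∃! τ : gal ℓ m (resField A), Induces A σ τ) ∧
    (∀ σ₁ ∈ decomp ℓ m A, ∀ σ₂ ∈ decomp ℓ m A,
      ∀ (τ₁ τ₂ : gal ℓ m (resField A)), Induces A σ₁ τ₁ → Induces A σ₂ τ₂ →
        Induces A (σ₁ + σ₂) (τ₁ + τ₂)) ∧
    (∀ τ : gal ℓ m (resField A), ∃ σ ∈ decomp ℓ m A, Induces A σ τ) ∧
    (∀ σ ∈ decomp ℓ m A, ∀ τ : gal ℓ m (resField A), Induces A σ τ →
      (τ = 0 ↔ σ ∈ inertia ℓ m A)) := by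
  refine ⟨fun σ hσ => ?_, fun σ₁ h₁ σ₂ h₂ τ₁ τ₂ ht1 ht2 => ?_,
    fun τ => exists_decomp_induces A τ, fun σ hσ τ hτ => induces_zero_iff A hσ hτ⟩
  · obtain ⟨τ, hτ⟩ := exists_induces A hσ
    exact ⟨τ, hτ, fun τ' hτ' => induces_eq A hτ' hτ⟩
  · intro x hx
    rw [galApp_add, ht1 x hx, ht2 x hx]
    rfl
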